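/- Let f : ℝ → ℝ be defined by f(x) = max(2x, 0) − max(4x − 2, 0) + max(2x − 2, 0). Then for every n ≥ 1 and every x ∈ [0,1], the n-fold composition satisfies f^{∘n}(x) = 2 · dist(2^{n−1} x, ℤ), where dist(y, ℤ) denotes the distance from y to the nearest integer. In particular, on [0,1] the n-fold composition is a sawtooth with 2^{n−1} teeth, so the number of affine pieces grows exponentially with the number of compositions. -/

import Mathlib

private lemma tent_key (f : ℝ → ℝ)
    (hf : ∀ x : ℝ, f x = max (2 * x) 0 - max (4 * x - 2) 0 + max (2 * x - 2) 0)
    (y : ℝ) : f (2 * |y - round y|) = 2 * |2 * y - round (2 * y)| := by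
  have h1 : (round y : ℝ) ≤ y + 1/2 := by rw [round_eq]; exact Int.floor_le _
  have h2 : y + 1/2 < round y + 1 := by
    rw [round_eq]; exact Int.lt_floor_add_one _
  set t : ℝ := y - round y with htdef
  have ht1 : -(1/2) ≤ t := by simp only [htdef]; linarith
  have ht2 : t < 1/2 := by simp only [htdef]; linarith
  have h2y : (2:ℝ) * y = 2 * t + ((2 * round y : ℤ) : ℝ) := by push_cast; ring
  have hd : 2 * |2 * y - (round (2 * y) : ℝ)| = 2 * |2 * t - (round (2 * t) : ℝ)| := by
    rw [h2y, round_add_intCast]; push_cast; ring_nf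
  rw [hd]
  rcases lt_or_ge t 0 with ht0 | ht0
  · rcases lt_or_ge t (-(1/4)) with htq | htq
    · have hc : round (2 * t) = -1 := by
        rw [round_eq, Int.floor_eq_iff]
        constructor <;> push_cast <;> linarith
      rw [hf, hc, abs_of_neg ht0]
      rw [max_eq_left (by linarith), max_eq_left (by linarith),
        max_eq_right (by linarith), abs_of_nonneg (by push_cast; linarith)]
      push_cast; ring
    · have hc : round (2 * t) = 0 := by
        rw [round_eq, Int.floor_eq_iff]
        constructor <;> push_cast <;> linarith
      rw [hf, hc, abs_of_neg ht0]
      rw [max_eq_left (by linarith), max_eq_right (by linarith),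
        max_eq_right (by linarith), abs_of_neg (by push_cast; linarith)]
      push_cast; ring
  · rcases lt_or_ge t (1/4) with htq | htq
    · have hc : round (2 * t) = 0 := by
        rw [round_eq, Int.floor_eq_iff]
        constructor <;> push_cast <;> linarith
      rw [hf, hc, abs_of_nonneg ht0]
      rw [max_eq_left (by linarith), max_eq_right (by linarith),
        max_eq_right (by linarith), abs_of_nonneg (by push_cast; linarith)]
      push_cast; ring
    · have hc : round (2 * t) = 1 := by
        rw [round_eq, Int.floor_eq_iff]
        constructor <;> push_cast <;> linarith
      rw [hf, hc, abs_of_nonneg ht0]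
      rw [max_eq_left (by linarith), max_eq_left (by linarith),
        max_eq_right (by linarith), abs_of_nonpos (by push_cast; linarith)]
      push_cast; ring

private lemma icc_rep (x : ℝ) (hx : x ∈ Set.Icc (0:ℝ) 1) :
    x = 2 * |x / 2 - round (x / 2)| := by
  obtain ⟨h0, h1⟩ := hx
  rcases eq_or_lt_of_le h1 with h | h
  · subst h
    norm_num [round_eq]
  · have hc : round (x / 2) = 0 := by
      rw [round_eq, Int.floor_eq_iff]
      constructor <;> push_cast <;> linarith
    rw [hc]
    push_cast
    rw [sub_zero, abs_of_nonneg (by linarith)]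
    ring

/-- The shallow ReLU network `f(x) = ReLU(2x) - ReLU(4x-2) + ReLU(2x-2)` (the tent map
on `[0,1]`) composed `n` times with itself equals a sawtooth with `2^(n-1)` teeth on
`[0,1]`: `f^[n] x = 2 * dist(2^(n-1) * x, ℤ)`, the distance to the nearest integer being
`|y - round y|`. -/
theorem sawtooth_iterate
    (f : ℝ → ℝ)
    (hf : ∀ x : ℝ, f x = max (2 * x) 0 - max (4 * x - 2) 0 + max (2 * x - 2) 0)
    (n : ℕ) (hn : 1 ≤ n) :
    ∀ x ∈ Set.Icc (0 : ℝ) 1,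
      f^[n] x = 2 * |2 ^ (n - 1) * x - round (2 ^ (n - 1) * x)| := by
  induction n with
  | zero => omega
  | succ m ih =>
    intro x hx
    rcases Nat.eq_zero_or_pos m with hm | hm
    · subst hm
      simp only [Function.iterate_succ, Function.iterate_zero, Function.comp,
        id, Nat.sub_self, pow_zero, one_mul, zero_add]
      rw [show f x = f (2 * |x / 2 - round (x / 2)|) from by rw [← icc_rep x hx],
        tent_key f hf (x / 2)]
      rw [show (2:ℝ) * (x / 2) = x from by ring]
    · rw [Function.iterate_succ_apply', ih hm x hx, tent_key f hf]
      have hpow : (2:ℝ) * (2 ^ (m - 1) * x) = 2 ^ (m + 1 - 1) * x := by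
        rw [show m + 1 - 1 = m - 1 + 1 from by omega, pow_succ]
        ring
      rw [hpow]
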